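/- Let n ≥ 2 agents have strict linear orders π₁, ..., π_n on a set M of m ≥ 2n items. If two distinct agents i ≠ j have the same most-preferred item (the top item of π_i equals the top item of π_j), then no allocation of all of M among the n agents is SD-EFX with respect to (π₁, ..., π_n). -/

import Mathlib

/-- An order on items is encoded as a ranking bijection `π : M ≃ Fin m`, where smaller rank
means more preferred.  `sdDom π A B` says `A` sd-dominates `B` with respect to `π`. -/
def sdDom {M : Type*} [DecidableEq M] {m : ℕ} (π : M ≃ Fin m) (A B : Finset M) : Prop :=
  B.card ≤ A.card ∧ ∀ k < B.card,
    (Finset.sort (A.image fun a => ((π a : Fin m) : ℕ)) (· ≤ ·)).getD k 0 ≤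
    (Finset.sort (B.image fun b => ((π b : Fin m) : ℕ)) (· ≤ ·)).getD k 0

/-- `A` is an allocation of the set `S` of items among `n` agents. -/
def IsAllocation {M : Type*} [DecidableEq M] {n : ℕ} (A : Fin n → Finset M) (S : Finset M) :
    Prop :=
  (∀ i j : Fin n, i ≠ j → Disjoint (A i) (A j)) ∧ Finset.univ.biUnion A = S

/-- The allocation `A` is SD-envy-free up to any item with respect to the orders `π`. -/
def SDEFX {M : Type*} [DecidableEq M] {n m : ℕ} (π : Fin n → (M ≃ Fin m))
    (A : Fin n → Finset M) : Prop :=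
  ∀ i j : Fin n, (A j).Nonempty → ∀ g ∈ A j, sdDom (π i) (A i) ((A j).erase g)

lemma sorted_getD_zero (s : Finset ℕ) (hs : s.Nonempty) :
    (Finset.sort s (· ≤ ·)).getD 0 0 = s.min' hs := by
  have hl : 0 < (Finset.sort s (· ≤ ·)).length := by
    rw [Finset.length_sort]; exact hs.card_pos
  rw [List.getD_eq_getElem _ _ hl]
  exact Finset.sorted_zero_eq_min'

/-- With `n ≥ 2` agents and `m ≥ 2n` items, if two distinct agents have the same
most-preferred item (the item of rank `0` in their respective orders), then no allocation of all
the items is SD-EFX. -/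
theorem no_sdefx_of_shared_favorite {M : Type*} [Fintype M] [DecidableEq M] (n m : ℕ)
    (hn : 2 ≤ n) (hm : 2 * n ≤ m) (hM : Fintype.card M = m)
    (π : Fin n → (M ≃ Fin m)) (i j : Fin n) (hij : i ≠ j)
    (htop : (π i).symm ⟨0, by omega⟩ = (π j).symm ⟨0, by omega⟩) :
    ¬ ∃ A : Fin n → Finset M, IsAllocation A Finset.univ ∧ SDEFX π A := by
  rintro ⟨A, ⟨hdisj, hcover⟩, hefx⟩
  have hm0 : 0 < m := by omega
  set g : M := (π i).symm ⟨0, hm0⟩ with hg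
  have hgmem : g ∈ Finset.univ.biUnion A := by rw [hcover]; exact Finset.mem_univ g
  obtain ⟨k, -, hgk⟩ := Finset.mem_biUnion.mp hgmem
  obtain ⟨a, hak, hatop⟩ : ∃ a : Fin n, a ≠ k ∧ (π a) g = ⟨0, hm0⟩ := by
    rcases eq_or_ne i k with h | h
    · refine ⟨j, by rw [← h]; exact hij.symm, ?_⟩
      rw [htop]; exact (π j).apply_symm_apply _
    · exact ⟨i, h, (π i).apply_symm_apply _⟩
  have hga : g ∉ A a := fun hmem =>
    (Finset.disjoint_left.mp (hdisj a k hak) hmem) hgk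
  -- Step 1: A k = {g}
  have hAk : A k = {g} := by
    by_contra hne
    obtain ⟨h, hhk, hhg⟩ : ∃ h ∈ A k, h ≠ g := by
      by_contra hcon
      push_neg at hcon
      exact hne (Finset.eq_singleton_iff_unique_mem.mpr ⟨hgk, hcon⟩)
    obtain ⟨hcard, hrank⟩ := hefx a k ⟨g, hgk⟩ h hhk
    have hge : g ∈ (A k).erase h := Finset.mem_erase.mpr ⟨fun e => hhg e.symm, hgk⟩
    have hpos : 0 < ((A k).erase h).card := Finset.card_pos.mpr ⟨g, hge⟩
    have h0 := hrank 0 hpos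
    set Bimg := ((A k).erase h).image fun b => (((π a) b : Fin m) : ℕ) with hBimg
    set Aimg := (A a).image fun b => (((π a) b : Fin m) : ℕ) with hAimg
    have h0B : (0 : ℕ) ∈ Bimg := Finset.mem_image.mpr ⟨g, hge, by rw [hatop]⟩
    have hBne : Bimg.Nonempty := ⟨0, h0B⟩
    have hAne : Aimg.Nonempty := by
      have : (A a).Nonempty := Finset.card_pos.mp (lt_of_lt_of_le hpos hcard)
      exact this.image _
    rw [sorted_getD_zero Aimg hAne, sorted_getD_zero Bimg hBne] at h0
    have hB0 : Bimg.min' hBne ≤ 0 := Finset.min'_le _ _ h0B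
    have hmin : Aimg.min' hAne = 0 := le_antisymm (h0.trans hB0) (Nat.zero_le _)
    have hmem := Finset.min'_mem Aimg hAne
    rw [hmin] at hmem
    obtain ⟨x, hx, hx0⟩ := Finset.mem_image.mp hmem
    have hxg : x = g := by
      have : (π a) x = ⟨0, hm0⟩ := Fin.ext hx0
      have := congrArg (π a).symm this
      rw [(π a).symm_apply_apply] at this
      rw [this, ← hatop, (π a).symm_apply_apply]
    exact hga (hxg ▸ hx)
  -- Step 2: every bundle has at most 2 items
  have hcard2 : ∀ l, (A l).card ≤ 2 := by
    intro l
    rcases (A l).eq_empty_or_nonempty with he | ⟨x, hx⟩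
    · simp [he]
    · have := (hefx k l ⟨x, hx⟩ x hx).1
      rw [hAk, Finset.card_erase_of_mem hx, Finset.card_singleton] at this
      omega
  have hsum : ∑ l, (A l).card = m := by
    rw [← Finset.card_biUnion (fun x _ y _ hxy => hdisj x y hxy), hcover,
      Finset.card_univ, hM]
  have hk1 : (A k).card = 1 := by rw [hAk]; simp
  have hsplit : ∑ l, (A l).card = (A k).card + ∑ l ∈ Finset.univ.erase k, (A l).card :=
    (Finset.add_sum_erase _ _ (Finset.mem_univ k)).symm
  have hrest : ∑ l ∈ Finset.univ.erase k, (A l).card ≤ (n - 1) * 2 := by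
    calc ∑ l ∈ Finset.univ.erase k, (A l).card
        ≤ (Finset.univ.erase k).card * 2 :=
          Finset.sum_le_card_nsmul _ _ 2 (fun l _ => hcard2 l)
      _ = (n - 1) * 2 := by
          rw [Finset.card_erase_of_mem (Finset.mem_univ k), Finset.card_univ,
            Fintype.card_fin]
  omega
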